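/- For natural numbers n, m with n ≥ m and any real r, the integral over ℝ of φ_n(x)·φ_m(2r−x) dx equals (1/√(2^{n+m} n! m!)) · e^{−r²} · ∑_{ℓ=0}^{m} (−2)^ℓ · ℓ! · binom(n,ℓ) · binom(m,ℓ) · (2r)^{n+m−2ℓ}, where φ_k(x) = H_k(x) e^{−x²/2} / (2^k k! √π)^{1/2} is the k-th Hermite function. -/

import Mathlib

open MeasureTheory Real Filter

/-- The physicists' Hermite polynomials, via the standard recurrence
`H_{n+2}(x) = 2x H_{n+1}(x) - 2(n+1) H_n(x)` (equivalent to the generating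
function `∑ H_k(x) t^k / k! = exp (2xt - t²)`). -/
noncomputable def hermiteH : ℕ → ℝ → ℝ
  | 0, _ => 1
  | 1, x => 2 * x
  | (n + 2), x => 2 * x * hermiteH (n + 1) x - 2 * (n + 1) * hermiteH n x

lemma hermiteH_succ (n : ℕ) (x : ℝ) :
    hermiteH (n + 1) x = 2 * x * hermiteH n x - 2 * n * hermiteH (n - 1) x := by
  cases n with
  | zero => simp [hermiteH]
  | succ m => simp [hermiteH]

lemma hermiteH_poly (n : ℕ) : ∃ p : Polynomial ℝ, ∀ x, hermiteH n x = p.eval x := by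
  induction n using Nat.twoStepInduction with
  | zero => exact ⟨1, by simp [hermiteH]⟩
  | one => exact ⟨Polynomial.C 2 * Polynomial.X, by intro x; simp [hermiteH]⟩
  | more n ih1 ih2 =>
    obtain ⟨p, hp⟩ := ih1
    obtain ⟨q, hq⟩ := ih2
    exact ⟨Polynomial.C 2 * Polynomial.X * q - Polynomial.C (2 * ((n:ℝ) + 1)) * p, by
      intro x; simp [hermiteH, hp, hq]⟩

lemma hermiteH_neg (n : ℕ) (x : ℝ) : hermiteH n (-x) = (-1) ^ n * hermiteH n x := by
  induction n using Nat.twoStepInduction generalizing x with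
  | zero => simp [hermiteH]
  | one => simp [hermiteH]
  | more n ih1 ih2 =>
    show hermiteH (n+2) (-x) = _
    simp only [hermiteH, ih1, ih2]
    ring

lemma hasDerivAt_hermiteH (n : ℕ) (x : ℝ) :
    HasDerivAt (hermiteH n) (2 * n * hermiteH (n - 1) x) x := by
  induction n using Nat.twoStepInduction generalizing x with
  | zero =>
    simpa using (hasDerivAt_const x (1:ℝ)).congr_of_eventuallyEq
      (Filter.Eventually.of_forall fun y => by simp [hermiteH])
  | one =>
    have h : HasDerivAt (fun y : ℝ => 2 * y) 2 x := by
      simpa using (hasDerivAt_id x).const_mul (2:ℝ)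
    have heq : hermiteH 1 =ᶠ[nhds x] (fun y : ℝ => 2 * y) :=
      Filter.Eventually.of_forall fun y => by show hermiteH 1 y = 2 * y; simp [hermiteH]
    have h2 := h.congr_of_eventuallyEq heq
    simpa [hermiteH] using h2
  | more n ih1 ih2 =>
    have ha : HasDerivAt (fun y : ℝ => 2 * y) 2 x := by
      simpa using (hasDerivAt_id x).const_mul (2:ℝ)
    have h1 := (ha.mul (ih2 (x := x))).sub ((ih1 (x := x)).const_mul (2 * ((n:ℝ)+1)))
    have heq : hermiteH (n+2) =ᶠ[nhds x]
        (fun y : ℝ => 2 * y * hermiteH (n + 1) y - 2 * ((n:ℝ) + 1) * hermiteH n y) :=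
      Filter.Eventually.of_forall fun y => by
        show hermiteH (n+2) y = _
        simp [hermiteH]
    have h2 := h1.congr_of_eventuallyEq heq
    refine h2.congr_deriv ?_
    have hs : n + 2 - 1 = n + 1 := rfl
    rw [hs, hermiteH_succ n x]
    have h1s : n + 1 - 1 = n := rfl
    rw [h1s]
    push_cast
    ring

lemma integrable_pow_gauss (k : ℕ) : Integrable fun x : ℝ => x ^ k * Real.exp (-x ^ 2) := by
  have h := integrable_rpow_mul_exp_neg_mul_sq (b := 1) one_pos (s := k) (by have := Nat.cast_nonneg (α := ℝ) k; linarith)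
  simpa [Real.rpow_natCast] using h

lemma integrable_poly_gauss (p : Polynomial ℝ) :
    Integrable fun x : ℝ => p.eval x * Real.exp (-x ^ 2) := by
  have : (fun x : ℝ => p.eval x * Real.exp (-x ^ 2))
      = fun x : ℝ => ∑ i ∈ Finset.range (p.natDegree + 1),
          p.coeff i * (x ^ i * Real.exp (-x ^ 2)) := by
    funext x
    rw [Polynomial.eval_eq_sum_range, Finset.sum_mul]
    simp [mul_assoc]
  rw [this]
  exact integrable_finset_sum _ fun i _ => (integrable_pow_gauss i).const_mul _

lemma tendsto_pow_gauss_top (k : ℕ) :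
    Tendsto (fun x : ℝ => x ^ k * Real.exp (-x ^ 2)) atTop (nhds 0) := by
  have h := rpow_mul_exp_neg_mul_sq_isLittleO_exp_neg (b := 1) one_pos (k : ℝ)
  have h2 : Tendsto (fun x : ℝ => Real.exp (-(1/2) * x)) atTop (nhds 0) := by
    have hm : Tendsto (fun x : ℝ => -(1/2) * x) atTop atBot :=
      Tendsto.const_mul_atTop_of_neg (by norm_num) tendsto_id
    exact Real.tendsto_exp_atBot.comp hm
  have := h.trans_tendsto h2
  simpa [Real.rpow_natCast] using this

lemma tendsto_poly_gauss_top (p : Polynomial ℝ) :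
    Tendsto (fun x : ℝ => p.eval x * Real.exp (-x ^ 2)) atTop (nhds 0) := by
  have : (fun x : ℝ => p.eval x * Real.exp (-x ^ 2))
      = fun x : ℝ => ∑ i ∈ Finset.range (p.natDegree + 1),
          p.coeff i * (x ^ i * Real.exp (-x ^ 2)) := by
    funext x
    rw [Polynomial.eval_eq_sum_range, Finset.sum_mul]
    simp [mul_assoc]
  rw [this]
  have : Tendsto (fun x : ℝ => ∑ i ∈ Finset.range (p.natDegree + 1),
      p.coeff i * (x ^ i * Real.exp (-x ^ 2))) atTop
      (nhds (∑ i ∈ Finset.range (p.natDegree + 1), p.coeff i * 0)) :=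
    tendsto_finset_sum _ fun i _ => (tendsto_pow_gauss_top i).const_mul _
  simpa using this

lemma tendsto_poly_gauss_bot (p : Polynomial ℝ) :
    Tendsto (fun x : ℝ => p.eval x * Real.exp (-x ^ 2)) atBot (nhds 0) := by
  have h := (tendsto_poly_gauss_top (p.comp (-Polynomial.X))).comp tendsto_neg_atBot_atTop
  have : ((fun x : ℝ => (p.comp (-Polynomial.X)).eval x * Real.exp (-x ^ 2)) ∘ fun x : ℝ => -x)
      = fun x : ℝ => p.eval x * Real.exp (-x ^ 2) := by
    funext x
    simp [Function.comp, Polynomial.eval_comp]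
  rwa [this] at h

lemma hasDerivAt_gauss (x : ℝ) :
    HasDerivAt (fun y : ℝ => Real.exp (-y ^ 2)) (-2 * x * Real.exp (-x ^ 2)) x := by
  have h : HasDerivAt (fun y : ℝ => -y ^ 2) (-(2 * x)) x := by
    have h0 := (hasDerivAt_pow 2 x).neg
    simp at h0
    exact h0
  have := h.exp
  convert this using 1
  ring

lemma integral_gauss_deriv (f f' : ℝ → ℝ)
    (hd : ∀ x, HasDerivAt f (f' x) x)
    (hp : ∃ p : Polynomial ℝ, ∀ x, f x = p.eval x)
    (hq : ∃ q : Polynomial ℝ, ∀ x, f' x = q.eval x) :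
    ∫ x : ℝ, (f' x - 2 * x * f x) * Real.exp (-x ^ 2) = 0 := by
  obtain ⟨p, hpe⟩ := hp
  obtain ⟨q, hqe⟩ := hq
  set F : ℝ → ℝ := fun x => f x * Real.exp (-x ^ 2) with hF
  set G : ℝ → ℝ := fun x => (f' x - 2 * x * f x) * Real.exp (-x ^ 2) with hG
  have hdF : ∀ x, HasDerivAt F (G x) x := by
    intro x
    have := (hd x).mul (hasDerivAt_gauss x)
    refine this.congr_deriv ?_
    ring
  have hGeq : G = fun x => (q - Polynomial.C 2 * Polynomial.X * p).eval x * Real.exp (-x ^ 2) := by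
    funext x; simp [hG, hqe, hpe]
  have hGint : Integrable G := by rw [hGeq]; exact integrable_poly_gauss _
  have hFtop : Tendsto F atTop (nhds 0) := by
    have : F = fun x => p.eval x * Real.exp (-x ^ 2) := by funext x; simp [hF, hpe]
    rw [this]; exact tendsto_poly_gauss_top p
  have hFbot : Tendsto F atBot (nhds 0) := by
    have : F = fun x => p.eval x * Real.exp (-x ^ 2) := by funext x; simp [hF, hpe]
    rw [this]; exact tendsto_poly_gauss_bot p
  have h1 : ∫ x in Set.Iic (0:ℝ), G x = F 0 - 0 :=
    integral_Iic_of_hasDerivAt_of_tendsto' (fun x _ => hdF x) hGint.integrableOn hFbot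
  have h2 : ∫ x in Set.Ioi (0:ℝ), G x = 0 - F 0 :=
    integral_Ioi_of_hasDerivAt_of_tendsto' (fun x _ => hdF x) hGint.integrableOn hFtop
  have h3 := intervalIntegral.integral_Iic_add_Ioi (b := (0:ℝ)) hGint.integrableOn hGint.integrableOn
  show ∫ x : ℝ, G x = 0
  rw [← h3, h1, h2]; ring

lemma integrable_HH_gauss (k j : ℕ) :
    Integrable fun x : ℝ => hermiteH k x * hermiteH j x * Real.exp (-x ^ 2) := by
  obtain ⟨p, hp⟩ := hermiteH_poly k
  obtain ⟨q, hq⟩ := hermiteH_poly j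
  have : (fun x : ℝ => hermiteH k x * hermiteH j x * Real.exp (-x ^ 2))
      = fun x => (p * q).eval x * Real.exp (-x ^ 2) := by
    funext x; simp [hp, hq]
  rw [this]; exact integrable_poly_gauss _

lemma integrable_xHH_gauss (k j : ℕ) :
    Integrable fun x : ℝ => 2 * x * (hermiteH k x * hermiteH j x) * Real.exp (-x ^ 2) := by
  obtain ⟨p, hp⟩ := hermiteH_poly k
  obtain ⟨q, hq⟩ := hermiteH_poly j
  have : (fun x : ℝ => 2 * x * (hermiteH k x * hermiteH j x) * Real.exp (-x ^ 2))
      = fun x => (Polynomial.C 2 * Polynomial.X * p * q).eval x * Real.exp (-x ^ 2) := by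
    funext x; simp [hp, hq]; ring
  rw [this]; exact integrable_poly_gauss _

lemma hermite_rec_integral (k j : ℕ) :
    ∫ x : ℝ, hermiteH (k+1) x * hermiteH j x * Real.exp (-x^2)
      = 2 * j * ∫ x : ℝ, hermiteH k x * hermiteH (j-1) x * Real.exp (-x^2) := by
  set f : ℝ → ℝ := fun y => hermiteH k y * hermiteH j y with hf
  set f' : ℝ → ℝ := fun x =>
    2*k*hermiteH (k-1) x * hermiteH j x + hermiteH k x * (2*j*hermiteH (j-1) x) with hf'
  have hd : ∀ x : ℝ, HasDerivAt f (f' x) x :=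
    fun x => (hasDerivAt_hermiteH k x).mul (hasDerivAt_hermiteH j x)
  obtain ⟨pk, hpk⟩ := hermiteH_poly k
  obtain ⟨pj, hpj⟩ := hermiteH_poly j
  obtain ⟨pk1, hpk1⟩ := hermiteH_poly (k-1)
  obtain ⟨pj1, hpj1⟩ := hermiteH_poly (j-1)
  have hz := integral_gauss_deriv f f' hd
    ⟨pk * pj, fun x => by simp [hf, hpk, hpj]⟩
    ⟨Polynomial.C (2*(k:ℝ)) * pk1 * pj + pk * (Polynomial.C (2*(j:ℝ)) * pj1), fun x => by
      simp [hf', hpk, hpj, hpk1, hpj1]⟩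
  have hpt : ∀ x : ℝ, (2*(j:ℝ)*(hermiteH k x * hermiteH (j-1) x * Real.exp (-x^2))
        - hermiteH (k+1) x * hermiteH j x * Real.exp (-x^2))
      = (f' x - 2*x*f x) * Real.exp (-x^2) := by
    intro x
    simp only [hf, hf']
    rw [hermiteH_succ k x]
    ring
  have hz2 : (∫ x : ℝ, (2*(j:ℝ)*(hermiteH k x * hermiteH (j-1) x * Real.exp (-x^2))
        - hermiteH (k+1) x * hermiteH j x * Real.exp (-x^2))) = 0 := by
    rw [integral_congr_ae (Filter.Eventually.of_forall hpt)]
    exact hz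
  rw [integral_sub ((integrable_HH_gauss k (j-1)).const_mul _)
    (integrable_HH_gauss (k+1) j), integral_const_mul] at hz2
  linarith

lemma hermite_orth (k j : ℕ) :
    ∫ x : ℝ, hermiteH k x * hermiteH j x * Real.exp (-x^2)
      = if k = j then 2^k * (k.factorial : ℝ) * Real.sqrt Real.pi else 0 := by
  induction k generalizing j with
  | zero =>
    cases j with
    | zero =>
      have hg := integral_gaussian 1
      simp only [hermiteH, one_mul, if_pos rfl]
      norm_num
      rw [show (fun x : ℝ => Real.exp (-x^2)) = fun x : ℝ => Real.exp (-1 * x^2) from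
        funext fun x => by norm_num]
      simpa using hg
    | succ j' =>
      have hcomm : ∀ x : ℝ, hermiteH 0 x * hermiteH (j'+1) x * Real.exp (-x^2)
          = hermiteH (j'+1) x * hermiteH 0 x * Real.exp (-x^2) := fun x => by ring
      rw [integral_congr_ae (Filter.Eventually.of_forall hcomm), hermite_rec_integral j' 0]
      simp
  | succ k' ih =>
    cases j with
    | zero =>
      rw [hermite_rec_integral k' 0]
      simp
    | succ j' =>
      rw [hermite_rec_integral k' (j'+1)]
      simp only [Nat.add_sub_cancel]
      rw [ih j']
      by_cases h : k' = j'
      · subst h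
        rw [if_pos rfl, if_pos rfl]
        push_cast [Nat.factorial_succ]
        ring
      · rw [if_neg h, if_neg (by omega)]
        ring

lemma hermiteH_add_arg (n : ℕ) (a u : ℝ) :
    hermiteH n (a + u)
      = ∑ k ∈ Finset.range (n+1), (n.choose k : ℝ) * (2*a)^(n-k) * hermiteH k u := by
  induction n using Nat.twoStepInduction with
  | zero => simp [hermiteH]
  | one => simp [hermiteH, Finset.sum_range_succ]; ring
  | more n ih1 ih2 =>
    have key : ∀ (kk : ℕ) (v : ℝ),
        2 * v * hermiteH kk v = hermiteH (kk+1) v + 2*kk*hermiteH (kk-1) v := by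
      intro kk v; rw [hermiteH_succ]; ring
    have hlhs : hermiteH (n+2) (a+u)
        = 2 * (a+u) * hermiteH (n+1) (a+u) - 2 * ((n:ℝ)+1) * hermiteH n (a+u) := by
      simp [hermiteH]
    rw [hlhs, ih1, ih2]
    have e1 : 2*(a+u)*(∑ k ∈ Finset.range (n+1+1), ((n+1).choose k : ℝ) * (2*a)^(n+1-k) * hermiteH k u)
        = (∑ k ∈ Finset.range (n+2), ((n+1).choose k : ℝ) * (2*a)^(n+2-k) * hermiteH k u)
        + (∑ k ∈ Finset.range (n+2), ((n+1).choose k : ℝ) * (2*a)^(n+1-k) * hermiteH (k+1) u)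
        + (∑ k ∈ Finset.range (n+2), ((n+1).choose k : ℝ) * (2*a)^(n+1-k) * (2*(k:ℝ)*hermiteH (k-1) u)) := by
      rw [Finset.mul_sum, ← Finset.sum_add_distrib, ← Finset.sum_add_distrib]
      refine Finset.sum_congr rfl fun k hk => ?_
      have hkk : n+1-k+1 = n+2-k := by have := Finset.mem_range.mp hk; omega
      have hpow : (2*a)^(n+2-k) = (2*a)^(n+1-k) * (2*a) := by rw [← hkk, pow_succ]
      rw [hpow]
      linear_combination (((n+1).choose k : ℝ) * (2*a)^(n+1-k)) * key k u
    have e3 : (∑ k ∈ Finset.range (n+2), ((n+1).choose k : ℝ) * (2*a)^(n+1-k) * (2*(k:ℝ)*hermiteH (k-1) u))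
        = 2*((n:ℝ)+1)*(∑ k ∈ Finset.range (n+1), (n.choose k : ℝ) * (2*a)^(n-k) * hermiteH k u) := by
      rw [Finset.sum_range_succ'
        (fun k => ((n+1).choose k : ℝ) * (2*a)^(n+1-k) * (2*(k:ℝ)*hermiteH (k-1) u)) (n+1)]
      rw [Finset.mul_sum]
      simp only [Nat.cast_zero, mul_zero, zero_mul, add_zero, Nat.succ_sub_succ,
        Nat.add_sub_cancel, Nat.sub_zero]
      refine Finset.sum_congr rfl fun i hi => ?_
      have h := Nat.add_one_mul_choose_eq n i
      have hr : ((n:ℝ)+1) * (n.choose i : ℝ) = ((n+1).choose (i+1) : ℝ) * ((i:ℝ)+1) := by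
        exact_mod_cast congrArg (Nat.cast (R := ℝ)) h
      push_cast
      linear_combination (-2)*(2*a)^(n-i)*(hermiteH i u) * hr
    have e2 : (∑ k ∈ Finset.range (n+2), ((n+1).choose k : ℝ) * (2*a)^(n+1-k) * hermiteH (k+1) u)
        = ∑ k ∈ Finset.range (n+3), (if k = 0 then 0 else ((n+1).choose (k-1) : ℝ) * (2*a)^(n+2-k) * hermiteH k u) := by
      rw [Finset.sum_range_succ'
        (fun k => (if k = 0 then 0 else ((n+1).choose (k-1) : ℝ) * (2*a)^(n+2-k) * hermiteH k u)) (n+2)]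
      simp [Nat.succ_sub_succ, Nat.succ_ne_zero]
    have e4 : (∑ k ∈ Finset.range (n+2), ((n+1).choose k : ℝ) * (2*a)^(n+2-k) * hermiteH k u)
        = ∑ k ∈ Finset.range (n+3), ((n+1).choose k : ℝ) * (2*a)^(n+2-k) * hermiteH k u := by
      rw [Finset.sum_range_succ (fun k => ((n+1).choose k : ℝ) * (2*a)^(n+2-k) * hermiteH k u) (n+2)]
      rw [Nat.choose_succ_self]
      simp
    have e5 : (∑ k ∈ Finset.range (n+3), ((n+1).choose k : ℝ) * (2*a)^(n+2-k) * hermiteH k u)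
        + (∑ k ∈ Finset.range (n+3), (if k = 0 then 0 else ((n+1).choose (k-1) : ℝ) * (2*a)^(n+2-k) * hermiteH k u))
        = ∑ k ∈ Finset.range (n+2+1), ((n+2).choose k : ℝ) * (2*a)^(n+2-k) * hermiteH k u := by
      rw [← Finset.sum_add_distrib]
      refine Finset.sum_congr rfl fun k _ => ?_
      cases k with
      | zero => simp
      | succ k' =>
        rw [if_neg (Nat.succ_ne_zero k')]
        have hps : (n+2).choose (k'+1) = (n+1).choose k' + (n+1).choose (k'+1) := by
          rw [Nat.choose_succ_succ]
        rw [hps]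
        simp only [Nat.succ_sub_succ, Nat.add_sub_cancel, Nat.sub_zero]
        push_cast
        ring
    linear_combination e1 + e2 + e3 + e4 + e5

/-- The `k`-th normalized Hermite function `φ_k(x) = (2^k k! √π)^{-1/2} H_k(x) e^{-x²/2}`. -/
noncomputable def phiH (k : ℕ) (x : ℝ) : ℝ :=
  hermiteH k x * Real.exp (-x ^ 2 / 2) /
    Real.sqrt (2 ^ k * (Nat.factorial k) * Real.sqrt Real.pi)

theorem stmt3 (n m : ℕ) (h : m ≤ n) (r : ℝ) :
    (∫ x : ℝ, phiH n x * phiH m (2 * r - x))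
      = (1 / Real.sqrt (2 ^ (n + m) * (Nat.factorial n) * (Nat.factorial m))) *
          Real.exp (-r ^ 2) *
          ∑ l ∈ Finset.range (m + 1),
            (-2 : ℝ) ^ l * (Nat.factorial l) * (n.choose l) * (m.choose l) *
              (2 * r) ^ (n + m - 2 * l) := by
  have hfn : (0:ℝ) < (n.factorial : ℝ) := by exact_mod_cast n.factorial_pos
  have hfm : (0:ℝ) < (m.factorial : ℝ) := by exact_mod_cast m.factorial_pos
  have hπ : (0:ℝ) < Real.sqrt Real.pi := Real.sqrt_pos.mpr Real.pi_pos
  set Dn := Real.sqrt (2 ^ n * (Nat.factorial n) * Real.sqrt Real.pi) with hDn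
  set Dm := Real.sqrt (2 ^ m * (Nat.factorial m) * Real.sqrt Real.pi) with hDm
  set F : ℝ → ℝ := fun x => hermiteH n x * hermiteH m (2*r - x) *
    (Real.exp (-x^2/2) * Real.exp (-(2*r - x)^2/2)) with hF
  have hpt1 : ∀ x : ℝ, phiH n x * phiH m (2*r - x) = (1 / (Dn * Dm)) * F x := by
    intro x
    simp only [phiH, hF, ← hDn, ← hDm]
    ring
  rw [integral_congr_ae (Filter.Eventually.of_forall hpt1), integral_const_mul]
  have hsub : (∫ x : ℝ, F x) = ∫ x : ℝ, F (r + x) :=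
    (integral_add_left_eq_self F r).symm
  rw [hsub]
  have hpt2 : ∀ u : ℝ, F (r + u)
      = Real.exp (-r^2) * (hermiteH n (r+u) * hermiteH m (r-u) * Real.exp (-u^2)) := by
    intro u
    simp only [hF]
    have h2r : 2*r - (r+u) = r - u := by ring
    rw [h2r, ← Real.exp_add, show -(r+u)^2/2 + -(r-u)^2/2 = -r^2 + -u^2 by ring,
      Real.exp_add]
    ring
  rw [integral_congr_ae (Filter.Eventually.of_forall hpt2), integral_const_mul]
  have hptsum : ∀ u : ℝ, hermiteH n (r+u) * hermiteH m (r-u) * Real.exp (-u^2)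
      = ∑ k ∈ Finset.range (n+1), ∑ j ∈ Finset.range (m+1),
          ((n.choose k : ℝ) * (2*r)^(n-k) * ((-1)^j * (m.choose j : ℝ) * (2*r)^(m-j)))
            * (hermiteH k u * hermiteH j u * Real.exp (-u^2)) := by
    intro u
    have h1 := hermiteH_add_arg n r u
    have h2 : hermiteH m (r - u)
        = ∑ j ∈ Finset.range (m+1), (m.choose j:ℝ)*(2*r)^(m-j)*((-1)^j * hermiteH j u) := by
      rw [show r - u = r + (-u) by ring, hermiteH_add_arg m r (-u)]
      exact Finset.sum_congr rfl fun j _ => by rw [hermiteH_neg]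
    rw [h1, h2, Finset.sum_mul_sum, Finset.sum_mul]
    refine Finset.sum_congr rfl fun k _ => ?_
    rw [Finset.sum_mul]
    refine Finset.sum_congr rfl fun j _ => ?_
    ring
  rw [integral_congr_ae (Filter.Eventually.of_forall hptsum)]
  rw [integral_finset_sum _ (fun k _ =>
    integrable_finset_sum _ (fun j _ => (integrable_HH_gauss k j).const_mul _))]
  have h5 : ∀ k : ℕ, (∫ u : ℝ, ∑ j ∈ Finset.range (m+1),
        ((n.choose k : ℝ) * (2*r)^(n-k) * ((-1)^j * (m.choose j : ℝ) * (2*r)^(m-j)))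
          * (hermiteH k u * hermiteH j u * Real.exp (-u^2)))
      = ∑ j ∈ Finset.range (m+1), (if k = j then
          ((n.choose k : ℝ) * (2*r)^(n-k) * ((-1)^j * (m.choose j : ℝ) * (2*r)^(m-j)))
            * (2^k * (k.factorial : ℝ) * Real.sqrt Real.pi) else 0) := by
    intro k
    rw [integral_finset_sum _ (fun j _ => (integrable_HH_gauss k j).const_mul _)]
    refine Finset.sum_congr rfl fun j _ => ?_
    rw [integral_const_mul, hermite_orth k j]
    split <;> simp
  rw [Finset.sum_congr rfl (fun k _ => h5 k), Finset.sum_comm]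
  have h6 : ∀ j ∈ Finset.range (m+1), (∑ k ∈ Finset.range (n+1), (if k = j then
          ((n.choose k : ℝ) * (2*r)^(n-k) * ((-1)^j * (m.choose j : ℝ) * (2*r)^(m-j)))
            * (2^k * (k.factorial : ℝ) * Real.sqrt Real.pi) else 0))
      = ((n.choose j : ℝ) * (2*r)^(n-j) * ((-1)^j * (m.choose j : ℝ) * (2*r)^(m-j)))
            * (2^j * (j.factorial : ℝ) * Real.sqrt Real.pi) := by
    intro j hj
    rw [Finset.sum_ite_eq' (Finset.range (n+1)) j]
    rw [if_pos (Finset.mem_range.mpr (by have := Finset.mem_range.mp hj; omega))]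
  rw [Finset.sum_congr rfl h6]
  have hDD : Dn * Dm = Real.sqrt ((2:ℝ)^(n+m) * (n.factorial:ℝ) * (m.factorial:ℝ)) *
      Real.sqrt Real.pi := by
    rw [hDn, hDm, ← Real.sqrt_mul (by positivity), ← Real.sqrt_mul (by positivity)]
    congr 1
    have hpi := Real.mul_self_sqrt Real.pi_nonneg
    rw [pow_add]
    linear_combination ((2:ℝ)^n*(n.factorial:ℝ)*2^m*(m.factorial:ℝ)) * hpi
  rw [hDD]
  simp only [Finset.mul_sum]
  refine Finset.sum_congr rfl fun l hl => ?_
  have hl' : l ≤ m := by have := Finset.mem_range.mp hl; omega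
  have hfact : ((2:ℝ)*r)^(n-l) * ((2:ℝ)*r)^(m-l) = (2*r)^(n+m-2*l) := by
    rw [← pow_add]; congr 1; omega
  have hCpos : (0:ℝ) < Real.sqrt ((2:ℝ)^(n+m) * (n.factorial:ℝ) * (m.factorial:ℝ)) :=
    Real.sqrt_pos.mpr (by positivity)
  rw [← hfact, neg_pow (2:ℝ) l]
  field_simp
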